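/- Let I be a finite set of 3D items with all dimensions in (0,1] and total volume at most 1/1728. If 90-degree rotations are allowed, i.e., each item may be packed after applying an arbitrary permutation to its triple of dimensions (width, depth, height), then all items of I can be packed into a single unit cube bin [0,1]^3. -/

import Mathlib

/-- The open region occupied by a 3D item of width `w`, depth `d`, height `h`
placed with its bottom-left-back corner at `(x, y, z)`. -/
def ItemRegion (w d h x y z : ℝ) : Set (ℝ × ℝ × ℝ) :=
  Set.Ioo x (x + w) ×ˢ (Set.Ioo y (y + d) ×ˢ Set.Ioo z (z + h))

/-- `IsPacking T w d h W D H x y z` : the placement `(x, y, z)` is a feasible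
axis-aligned non-overlapping packing of the items of `T` (with dimensions
`w`, `d`, `h`) into the box `[0,W] × [0,D] × [0,H]`. -/
def IsPacking {ι : Type*} (T : Finset ι) (w d h : ι → ℝ) (W D H : ℝ)
    (x y z : ι → ℝ) : Prop :=
  (∀ i ∈ T, 0 ≤ x i ∧ x i + w i ≤ W ∧ 0 ≤ y i ∧ y i + d i ≤ D ∧
      0 ≤ z i ∧ z i + h i ≤ H) ∧
  (∀ i ∈ T, ∀ j ∈ T, i ≠ j →
    Disjoint (ItemRegion (w i) (d i) (h i) (x i) (y i) (z i))
             (ItemRegion (w j) (d j) (h j) (x j) (y j) (z j)))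

/-- The items of `T` can be packed into the box `[0,W] × [0,D] × [0,H]`. -/
def CanPack {ι : Type*} (T : Finset ι) (w d h : ι → ℝ) (W D H : ℝ) : Prop :=
  ∃ x y z : ι → ℝ, IsPacking T w d h W D H x y z

lemma Ioo_empty_iff {a b c d : ℝ} :
    Set.Ioo a b ∩ Set.Ioo c d = ∅ ↔ min b d ≤ max a c := by
  rw [Set.Ioo_inter_Ioo]
  constructor
  · intro h
    by_contra hlt
    push_neg at hlt
    exact (Set.nonempty_Ioo.2 hlt).ne_empty h
  · intro h
    exact Set.Ioo_eq_empty (not_lt.2 h)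

lemma disjoint_itemRegion_iff {w d h x y z w' d' h' x' y' z' : ℝ} :
    Disjoint (ItemRegion w d h x y z) (ItemRegion w' d' h' x' y' z') ↔
      (min (x + w) (x' + w') ≤ max x x' ∨ min (y + d) (y' + d') ≤ max y y' ∨
        min (z + h) (z' + h') ≤ max z z') := by
  rw [Set.disjoint_iff_inter_eq_empty, ItemRegion, ItemRegion, Set.prod_inter_prod,
    Set.prod_inter_prod, Set.prod_eq_empty_iff, Set.prod_eq_empty_iff,
    Ioo_empty_iff, Ioo_empty_iff, Ioo_empty_iff]

lemma translate_minmax {a b c d o : ℝ} (h : min a b ≤ max c d) :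
    min (a + o) (b + o) ≤ max (c + o) (d + o) := by
  simpa [min_add_add_right, max_add_add_right] using add_le_add_right h o

/-- Concatenate packings of the fibers of `g` along the x-axis. -/
lemma canPack_concat_x {ι β : Type*} [DecidableEq β] (T : Finset ι) (w d h : ι → ℝ)
    (g : ι → β) (Wc : β → ℝ) (W D H : ℝ) (hWc : ∀ b, 0 ≤ Wc b)
    (hsub : ∀ b ∈ T.image g, CanPack (T.filter (fun i => g i = b)) w d h (Wc b) D H)
    (htot : ∑ b ∈ T.image g, Wc b ≤ W) :
    CanPack T w d h W D H := by
  classical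
  letI : LinearOrder β := IsWellOrder.linearOrder WellOrderingRel
  choose! xs ys zs hb hd using hsub
  set o : β → ℝ := fun b => ∑ b' ∈ (T.image g).filter (· < b), Wc b' with ho
  have ho_nonneg : ∀ b, 0 ≤ o b := fun b => Finset.sum_nonneg fun b' _ => hWc b'
  have hoWc : ∀ b ∈ T.image g, o b + Wc b ≤ W := by
    intro b hbmem
    have hsub2 : insert b ((T.image g).filter (· < b)) ⊆ T.image g := by
      intro b' hb'
      rcases Finset.mem_insert.1 hb' with rfl | hb'
      · exact hbmem
      · exact Finset.mem_of_mem_filter _ hb'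
    have hnot : b ∉ (T.image g).filter (· < b) := by
      simp [Finset.mem_filter]
    calc o b + Wc b = ∑ b' ∈ insert b ((T.image g).filter (· < b)), Wc b' := by
          rw [Finset.sum_insert hnot]; ring
      _ ≤ ∑ b' ∈ T.image g, Wc b' :=
          Finset.sum_le_sum_of_subset_of_nonneg hsub2 (fun b' _ _ => hWc b')
      _ ≤ W := htot
  have hlt : ∀ b ∈ T.image g, ∀ b' ∈ T.image g, b < b' → o b + Wc b ≤ o b' := by
    intro b hbm b' hb'm hlt
    have hsub2 : insert b ((T.image g).filter (· < b)) ⊆ (T.image g).filter (· < b') := by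
      intro c hc
      rcases Finset.mem_insert.1 hc with rfl | hc
      · exact Finset.mem_filter.2 ⟨hbm, hlt⟩
      · obtain ⟨hc1, hc2⟩ := Finset.mem_filter.1 hc
        exact Finset.mem_filter.2 ⟨hc1, lt_trans hc2 hlt⟩
    have hnot : b ∉ (T.image g).filter (· < b) := by simp [Finset.mem_filter]
    calc o b + Wc b = ∑ c ∈ insert b ((T.image g).filter (· < b)), Wc c := by
          rw [Finset.sum_insert hnot]; ring
      _ ≤ o b' := Finset.sum_le_sum_of_subset_of_nonneg hsub2 (fun c _ _ => hWc c)
  refine ⟨fun i => o (g i) + xs (g i) i, fun i => ys (g i) i, fun i => zs (g i) i, ?_, ?_⟩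
  · intro i hi
    dsimp only
    have him : g i ∈ T.image g := Finset.mem_image_of_mem g hi
    have hif : i ∈ T.filter (fun j => g j = g i) := Finset.mem_filter.2 ⟨hi, rfl⟩
    obtain ⟨h1, h2, h3, h4, h5, h6⟩ := hb (g i) him i hif
    refine ⟨by have := ho_nonneg (g i); linarith, ?_, h3, h4, h5, h6⟩
    · calc o (g i) + xs (g i) i + w i ≤ o (g i) + Wc (g i) := by linarith
        _ ≤ W := hoWc _ him
  · intro i hi j hj hij
    dsimp only
    have him : g i ∈ T.image g := Finset.mem_image_of_mem g hi
    have hjm : g j ∈ T.image g := Finset.mem_image_of_mem g hj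
    rcases eq_or_ne (g i) (g j) with heq | hne
    · have hif : i ∈ T.filter (fun k => g k = g i) := Finset.mem_filter.2 ⟨hi, rfl⟩
      have hjf : j ∈ T.filter (fun k => g k = g i) := Finset.mem_filter.2 ⟨hj, heq.symm⟩
      have := hd (g i) him i hif j hjf hij
      rw [disjoint_itemRegion_iff] at this ⊢
      rw [← heq]
      rcases this with h3 | h3 | h3
      · left
        have := translate_minmax (o := o (g i)) h3
        convert this using 2 <;> ring
      · right; left; exact h3
      · right; right; exact h3
    · have hb1 : ∀ k (hk : k ∈ T), 0 ≤ xs (g k) k ∧ xs (g k) k + w k ≤ Wc (g k) := by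
        intro k hk
        have := hb (g k) (Finset.mem_image_of_mem g hk) k (Finset.mem_filter.2 ⟨hk, rfl⟩)
        exact ⟨this.1, this.2.1⟩
      obtain ⟨hxi0, hxiW⟩ := hb1 i hi
      obtain ⟨hxj0, hxjW⟩ := hb1 j hj
      rw [disjoint_itemRegion_iff]
      left
      rcases hne.lt_or_gt with hlt' | hlt'
      · have := hlt (g i) him (g j) hjm hlt'
        calc min (o (g i) + xs (g i) i + w i) (o (g j) + xs (g j) j + w j)
            ≤ o (g i) + xs (g i) i + w i := min_le_left _ _
          _ ≤ o (g j) + xs (g j) j := by linarith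
          _ ≤ max (o (g i) + xs (g i) i) (o (g j) + xs (g j) j) := le_max_right _ _
      · have := hlt (g j) hjm (g i) him hlt'
        calc min (o (g i) + xs (g i) i + w i) (o (g j) + xs (g j) j + w j)
            ≤ o (g j) + xs (g j) j + w j := min_le_right _ _
          _ ≤ o (g i) + xs (g i) i := by linarith
          _ ≤ max (o (g i) + xs (g i) i) (o (g j) + xs (g j) j) := le_max_left _ _

lemma canPack_swap_xy {ι : Type*} {T : Finset ι} {w d h : ι → ℝ} {W D H : ℝ}
    (hp : CanPack T w d h W D H) : CanPack T d w h D W H := by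
  obtain ⟨x, y, z, h1, h2⟩ := hp
  refine ⟨y, x, z, ?_, ?_⟩
  · intro i hi
    obtain ⟨a1, a2, a3, a4, a5, a6⟩ := h1 i hi
    exact ⟨a3, a4, a1, a2, a5, a6⟩
  · intro i hi j hj hne
    have := h2 i hi j hj hne
    rw [disjoint_itemRegion_iff] at this ⊢
    tauto

lemma canPack_swap_yz {ι : Type*} {T : Finset ι} {w d h : ι → ℝ} {W D H : ℝ}
    (hp : CanPack T w d h W D H) : CanPack T w h d W H D := by
  obtain ⟨x, y, z, h1, h2⟩ := hp
  refine ⟨x, z, y, ?_, ?_⟩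
  · intro i hi
    obtain ⟨a1, a2, a3, a4, a5, a6⟩ := h1 i hi
    exact ⟨a1, a2, a5, a6, a3, a4⟩
  · intro i hi j hj hne
    have := h2 i hi j hj hne
    rw [disjoint_itemRegion_iff] at this ⊢
    tauto

lemma canPack_swap_xz {ι : Type*} {T : Finset ι} {w d h : ι → ℝ} {W D H : ℝ}
    (hp : CanPack T w d h W D H) : CanPack T h d w H D W :=
  canPack_swap_yz (canPack_swap_xy (canPack_swap_yz hp))

/-- Concatenate packings of the fibers of `g` along the z-axis. -/
lemma canPack_concat_z {ι β : Type*} [DecidableEq β] (T : Finset ι) (w d h : ι → ℝ)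
    (g : ι → β) (Hc : β → ℝ) (W D H : ℝ) (hHc : ∀ b, 0 ≤ Hc b)
    (hsub : ∀ b ∈ T.image g, CanPack (T.filter (fun i => g i = b)) w d h W D (Hc b))
    (htot : ∑ b ∈ T.image g, Hc b ≤ H) :
    CanPack T w d h W D H :=
  canPack_swap_xz (canPack_concat_x T h d w g Hc H D W hHc
    (fun b hb => canPack_swap_xz (hsub b hb)) htot)

/-- Concatenate packings of the fibers of `g` along the y-axis. -/
lemma canPack_concat_y {ι β : Type*} [DecidableEq β] (T : Finset ι) (w d h : ι → ℝ)
    (g : ι → β) (Dc : β → ℝ) (W D H : ℝ) (hDc : ∀ b, 0 ≤ Dc b)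
    (hsub : ∀ b ∈ T.image g, CanPack (T.filter (fun i => g i = b)) w d h W (Dc b) H)
    (htot : ∑ b ∈ T.image g, Dc b ≤ D) :
    CanPack T w d h W D H :=
  canPack_swap_xy (canPack_concat_x T d w h g Dc D W H hDc
    (fun b hb => canPack_swap_xy (hsub b hb)) htot)

lemma canPack_single {ι : Type*} (i : ι) (w d h : ι → ℝ) (W D H : ℝ)
    (h1 : w i ≤ W) (h2 : d i ≤ D) (h3 : h i ≤ H) :
    CanPack ({i} : Finset ι) w d h W D H := by
  refine ⟨fun _ => 0, fun _ => 0, fun _ => 0, ?_, ?_⟩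
  · intro j hj
    rw [Finset.mem_singleton] at hj
    subst hj
    dsimp only
    exact ⟨le_refl _, by linarith, le_refl _, by linarith, le_refl _, by linarith⟩
  · intro j hj k hk hne
    rw [Finset.mem_singleton] at hj hk
    exact absurd (hj.trans hk.symm) hne

/-- Pack items in a row along the x-axis. -/
lemma canPack_line {ι : Type*} (T : Finset ι) (w d h : ι → ℝ) (W D H : ℝ)
    (hdim : ∀ i ∈ T, 0 ≤ w i ∧ d i ≤ D ∧ h i ≤ H)
    (htot : ∑ i ∈ T, w i ≤ W) :
    CanPack T w d h W D H := by
  classical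
  refine canPack_concat_x T w d h id (fun i => max (w i) 0) W D H
    (fun i => le_max_right _ _) ?_ ?_
  · intro b hb
    rw [Finset.mem_image] at hb
    obtain ⟨a, ha, rfl⟩ := hb
    have : T.filter (fun i => id i = id a) = {a} := by
      ext x
      simp only [Finset.mem_filter, Finset.mem_singleton, id]
      exact ⟨fun hx => hx.2, fun hx => ⟨hx ▸ ha, hx⟩⟩
    rw [this]
    exact canPack_single a w d h _ D H (le_max_left _ _) (hdim a ha).2.1 (hdim a ha).2.2
  · rw [Finset.image_id]
    calc ∑ i ∈ T, max (w i) 0 = ∑ i ∈ T, w i :=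
          Finset.sum_congr rfl (fun i hi => max_eq_left (hdim i hi).1)
      _ ≤ W := htot

lemma sum_multiple {ι : Type*} {s : Finset ι} {L : ι → ℝ} {c : ℝ}
    (h : ∀ j ∈ s, ∃ m : ℕ, L j = m * c) : ∃ M : ℕ, ∑ j ∈ s, L j = M * c := by
  classical
  induction s using Finset.induction_on with
  | empty => exact ⟨0, by simp⟩
  | insert a s hnotmem ih =>
    obtain ⟨m, hm⟩ := h a (Finset.mem_insert_self a s)
    obtain ⟨M, hM⟩ := ih (fun j hj => h j (Finset.mem_insert_of_mem hj))
    exact ⟨m + M, by rw [Finset.sum_insert hnotmem, hm, hM]; push_cast; ring⟩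

lemma dyadic_div {k kj : ℕ} (hle : (2:ℝ)⁻¹ ^ k ≤ (2:ℝ)⁻¹ ^ kj) :
    ∃ m : ℕ, (2:ℝ)⁻¹ ^ kj = m * (2:ℝ)⁻¹ ^ k := by
  have hkj : kj ≤ k := by
    by_contra hc
    push_neg at hc
    have h2 : (2:ℝ)⁻¹ ^ kj < (2:ℝ)⁻¹ ^ k :=
      pow_lt_pow_right_of_lt_one₀ (by norm_num) (by norm_num) hc
    linarith
  refine ⟨2 ^ (k - kj), ?_⟩
  have h1 : (2:ℝ) ^ (k - kj) * (2:ℝ)⁻¹ ^ (k - kj) = 1 := by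
    rw [← mul_pow]; norm_num
  have h2 : (2:ℝ)⁻¹ ^ k = (2:ℝ)⁻¹ ^ kj * (2:ℝ)⁻¹ ^ (k - kj) := by
    rw [← pow_add]
    congr 1
    omega
  push_cast
  rw [h2]
  linear_combination -((2:ℝ)⁻¹ ^ kj) * h1

/-- Dyadic first-fit: items with dyadic lengths can be partitioned into
`⌈total length⌉` bins each of content at most 1. -/
lemma dyadic_binning {ι : Type*} [DecidableEq ι] (T : Finset ι) (L : ι → ℝ)
    (hL : ∀ i ∈ T, ∃ k : ℕ, L i = (2:ℝ)⁻¹ ^ k) :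
    ∃ f : ι → ℕ, (∀ i ∈ T, f i < ⌈∑ i ∈ T, L i⌉₊) ∧
      ∀ r : ℕ, ∑ i ∈ T.filter (fun i => f i = r), L i ≤ 1 := by
  classical
  induction T using Finset.strongInduction with
  | _ T ih =>
  rcases T.eq_empty_or_nonempty with rfl | hne
  · exact ⟨fun _ => 0, by simp, fun r => by simp⟩
  obtain ⟨i₀, hi₀, hmin⟩ := T.exists_min_image L hne
  obtain ⟨k, hk⟩ := hL i₀ hi₀
  have hc0 : 0 < L i₀ := by rw [hk]; positivity
  have hc1 : L i₀ ≤ 1 := by rw [hk]; exact pow_le_one₀ (by norm_num) (by norm_num)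
  set T' := T.erase i₀ with hT'def
  have hT'sub : T' ⊂ T := Finset.erase_ssubset hi₀
  obtain ⟨f', hf'1, hf'2⟩ := ih T' hT'sub (fun i hi => hL i (Finset.mem_of_mem_erase hi))
  set K' := ⌈∑ i ∈ T', L i⌉₊ with hK'def
  have hsum : ∑ i ∈ T', L i + L i₀ = ∑ i ∈ T, L i := Finset.sum_erase_add T L hi₀
  have hKK : K' ≤ ⌈∑ i ∈ T, L i⌉₊ := Nat.ceil_mono (by linarith)
  have hTins : T = insert i₀ T' := (Finset.insert_erase hi₀).symm
  have hi₀T' : i₀ ∉ T' := Finset.notMem_erase i₀ T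
  by_cases hcase : ∃ r, r < K' ∧ ∑ i ∈ T'.filter (fun i => f' i = r), L i + L i₀ ≤ 1
  · obtain ⟨r, hrK, hradd⟩ := hcase
    refine ⟨Function.update f' i₀ r, ?_, ?_⟩
    · intro i hi
      rcases eq_or_ne i i₀ with rfl | hne2
      · rw [Function.update_self]; exact lt_of_lt_of_le hrK hKK
      · rw [Function.update_of_ne hne2]
        exact lt_of_lt_of_le (hf'1 i (Finset.mem_erase.2 ⟨hne2, hi⟩)) hKK
    · intro s
      have hfc : T'.filter (fun i => Function.update f' i₀ r i = s)
          = T'.filter (fun i => f' i = s) := by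
        apply Finset.filter_congr
        intro i hi
        rw [Function.update_of_ne (Finset.ne_of_mem_erase hi)]
      rw [hTins, Finset.filter_insert, Function.update_self]
      split
      · rename_i hsr
        rw [Finset.sum_insert (fun hmem => hi₀T' (Finset.mem_of_mem_filter _ hmem)), hfc]
        subst hsr
        linarith
      · rw [hfc]; exact hf'2 s
  · push_neg at hcase
    have hrow : ∀ r, r < K' → (1:ℝ) ≤ ∑ i ∈ T'.filter (fun i => f' i = r), L i := by
      intro r hr
      have hgt : 1 - L i₀ < ∑ i ∈ T'.filter (fun i => f' i = r), L i := by
        have := hcase r hr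
        linarith
      obtain ⟨M, hM⟩ := sum_multiple (s := T'.filter (fun i => f' i = r)) (L := L) (c := L i₀) (fun j hj => by
        obtain ⟨kj, hkj⟩ := hL j (Finset.mem_of_mem_erase (Finset.mem_of_mem_filter _ hj))
        have hge : L i₀ ≤ L j := hmin j (Finset.mem_of_mem_erase (Finset.mem_of_mem_filter _ hj))
        rw [hkj, hk] at hge ⊢
        exact dyadic_div hge)
      have hle1 : (M:ℝ) * L i₀ ≤ 1 := hM ▸ hf'2 r
      have h2k : (2:ℝ) ^ k * L i₀ = 1 := by rw [hk, ← mul_pow]; norm_num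
      have hM2 : (2:ℝ)^k ≤ (M:ℝ) := by
        have hlt : (2:ℝ)^k < (M:ℝ) + 1 := by
          rw [hM] at hgt
          nlinarith [hc0]
        have : (2:ℕ)^k < M + 1 := by exact_mod_cast (by push_cast; exact hlt : ((2:ℕ)^k : ℝ) < ((M+1 : ℕ):ℝ))
        have : (2:ℕ)^k ≤ M := by omega
        exact_mod_cast this
      rw [hM]
      nlinarith [hc0]
    have hT'K : (K' : ℝ) ≤ ∑ i ∈ T', L i := by
      have hfib : ∑ r ∈ Finset.range K', ∑ i ∈ T'.filter (fun i => f' i = r), L i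
          = ∑ i ∈ T', L i :=
        Finset.sum_fiberwise_of_maps_to (fun i hi => Finset.mem_range.2 (hf'1 i hi)) L
      calc (K' : ℝ) = ∑ _r ∈ Finset.range K', (1:ℝ) := by simp
        _ ≤ ∑ r ∈ Finset.range K', ∑ i ∈ T'.filter (fun i => f' i = r), L i :=
            Finset.sum_le_sum (fun r hr => hrow r (Finset.mem_range.1 hr))
        _ = ∑ i ∈ T', L i := hfib
    have hKlt : K' < ⌈∑ i ∈ T, L i⌉₊ := by
      rw [Nat.lt_ceil]
      linarith
    refine ⟨Function.update f' i₀ K', ?_, ?_⟩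
    · intro i hi
      rcases eq_or_ne i i₀ with rfl | hne2
      · rw [Function.update_self]; exact hKlt
      · rw [Function.update_of_ne hne2]
        exact lt_of_lt_of_le (hf'1 i (Finset.mem_erase.2 ⟨hne2, hi⟩)) hKK
    · intro s
      have hfc : T'.filter (fun i => Function.update f' i₀ K' i = s)
          = T'.filter (fun i => f' i = s) := by
        apply Finset.filter_congr
        intro i hi
        rw [Function.update_of_ne (Finset.ne_of_mem_erase hi)]
      rw [hTins, Finset.filter_insert, Function.update_self]
      split
      · rename_i hsr
        rw [Finset.sum_insert (fun hmem => hi₀T' (Finset.mem_of_mem_filter _ hmem)), hfc]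
        subst hsr
        have hempty : T'.filter (fun i => f' i = K') = ∅ := by
          apply Finset.filter_false_of_mem
          intro i hi
          exact Nat.ne_of_lt (hf'1 i hi)
        rw [hempty]
        simpa using hc1
      · rw [hfc]; exact hf'2 s

/-- Round up to a dyadic. -/
lemma round_dyadic (r : ℝ) : ∃ k : ℕ, 0 < r → r ≤ 1 →
    (r ≤ 2⁻¹ ^ k ∧ (2:ℝ)⁻¹ ^ k < 2 * r ∧ ∀ m : ℕ, r ≤ 2⁻¹ ^ m → m ≤ k) := by
  by_cases h0 : 0 < r
  · by_cases h1 : r ≤ 1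
    · have hex : ∃ n : ℕ, (2:ℝ)⁻¹ ^ (n + 1) < r := by
        obtain ⟨n, hn⟩ := exists_pow_lt_of_lt_one h0 (by norm_num : (2:ℝ)⁻¹ < 1)
        exact ⟨n, lt_of_le_of_lt (pow_le_pow_of_le_one (by norm_num) (by norm_num)
          (Nat.le_succ n)) hn⟩
      refine ⟨Nat.find hex, fun _ _ => ⟨?_, ?_, ?_⟩⟩
      · rcases Nat.eq_zero_or_pos (Nat.find hex) with he | he
        · rw [he]; simpa using h1
        · have := Nat.find_min hex (Nat.sub_lt he one_pos)
          push_neg at this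
          calc r ≤ 2⁻¹ ^ (Nat.find hex - 1 + 1) := this
            _ = 2⁻¹ ^ Nat.find hex := by congr 1; omega
      · have := Nat.find_spec hex
        have h2 : (2:ℝ)⁻¹ ^ Nat.find hex = 2 * 2⁻¹ ^ (Nat.find hex + 1) := by
          rw [pow_succ]; ring
        rw [h2]; linarith
      · intro m hm
        by_contra hc
        push_neg at hc
        have h3 : (2:ℝ)⁻¹ ^ m ≤ 2⁻¹ ^ (Nat.find hex + 1) :=
          pow_le_pow_of_le_one (by norm_num) (by norm_num) (by omega)
        have := Nat.find_spec hex
        linarith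
    · exact ⟨0, fun _ hh => absurd hh h1⟩
  · exact ⟨0, fun hh => absurd hh h0⟩

lemma sum_dyadic_exponents (E : Finset ℕ) (m : ℕ) (hE : ∀ e ∈ E, m ≤ e) :
    ∑ e ∈ E, (2:ℝ)⁻¹ ^ e ≤ 2 * 2⁻¹ ^ m := by
  classical
  set n := E.sup id + 1 with hn
  have hsub : E ⊆ Finset.Ico m n := by
    intro e he
    exact Finset.mem_Ico.2 ⟨hE e he, by
      have := Finset.le_sup (f := id) he
      simp only [id] at this
      omega⟩
  calc ∑ e ∈ E, (2:ℝ)⁻¹ ^ e ≤ ∑ e ∈ Finset.Ico m n, (2:ℝ)⁻¹ ^ e :=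
        Finset.sum_le_sum_of_subset_of_nonneg hsub (fun e _ _ => by positivity)
    _ = ∑ j ∈ Finset.range (n - m), (2:ℝ)⁻¹ ^ (m + j) := by
        rw [Finset.sum_Ico_eq_sum_range]
    _ = (2:ℝ)⁻¹ ^ m * ∑ j ∈ Finset.range (n - m), (2:ℝ)⁻¹ ^ j := by
        rw [Finset.mul_sum]
        exact Finset.sum_congr rfl (fun j _ => by rw [pow_add])
    _ ≤ (2:ℝ)⁻¹ ^ m * 2 := by
        have h2 : ∑ j ∈ Finset.range (n - m), (2:ℝ)⁻¹ ^ j ≤ 2 := by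
          have := sum_geometric_two_le (n - m)
          simpa [one_div] using this
        have : (0:ℝ) ≤ (2:ℝ)⁻¹ ^ m := by positivity
        nlinarith
    _ = 2 * 2⁻¹ ^ m := by ring

lemma sum_distinct_dyadic (s : Finset ℝ) (m : ℕ)
    (hs : ∀ x ∈ s, ∃ e : ℕ, m ≤ e ∧ x = (2:ℝ)⁻¹ ^ e) :
    ∑ x ∈ s, x ≤ 2 * 2⁻¹ ^ m := by
  classical
  choose! E hE1 hE2 using hs
  have hinj : ∀ x ∈ s, ∀ y ∈ s, E x = E y → x = y := by
    intro x hx y hy hxy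
    rw [hE2 x hx, hE2 y hy, hxy]
  calc ∑ x ∈ s, x = ∑ x ∈ s, (2:ℝ)⁻¹ ^ (E x) :=
        Finset.sum_congr rfl (fun x hx => hE2 x hx)
    _ = ∑ e ∈ s.image E, (2:ℝ)⁻¹ ^ e := (Finset.sum_image hinj).symm
    _ ≤ 2 * 2⁻¹ ^ m := sum_dyadic_exponents _ m (by
        intro e he
        obtain ⟨x, hx, rfl⟩ := Finset.mem_image.1 he
        exact hE1 x hx)

lemma ms12 (x y z : ℝ) : ({y, x, z} : Multiset ℝ) = {x, y, z} := by
  simp only [Multiset.insert_eq_cons]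
  exact Multiset.cons_swap y x {z}

lemma ms23 (x y z : ℝ) : ({x, z, y} : Multiset ℝ) = {x, y, z} := by
  simp only [Multiset.insert_eq_cons]
  congr 1
  exact Multiset.cons_swap z y 0

/-- Sort a triple. -/
lemma sort3 (u v t : ℝ) : ∃ c b a : ℝ,
    ({c, b, a} : Multiset ℝ) = {u, v, t} ∧ a ≤ b ∧ b ≤ c := by
  rcases le_total u v with h1 | h1 <;> rcases le_total v t with h2 | h2 <;>
    rcases le_total u t with h3 | h3
  · exact ⟨t, v, u, by rw [ms12 v t u, ms23 v u t, ms12 u v t], h1, h2⟩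
  · exact ⟨t, v, u, by rw [ms12 v t u, ms23 v u t, ms12 u v t], h1, h2⟩
  · exact ⟨v, t, u, by rw [ms23 v u t, ms12 u v t], h3, h2⟩
  · exact ⟨v, u, t, ms12 u v t, h3, h1⟩
  · exact ⟨t, u, v, by rw [ms12 u t v, ms23 u v t], h1, h3⟩
  · exact ⟨u, t, v, ms23 u v t, h2, h3⟩
  · exact ⟨u, v, t, rfl, h2, h1⟩
  · exact ⟨u, v, t, rfl, h2, h1⟩

lemma multiset_triple_prod {x y z u v t : ℝ} (h : ({x, y, z} : Multiset ℝ) = {u, v, t}) :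
    x * y * z = u * v * t := by
  have := congrArg Multiset.prod h
  simp only [Multiset.insert_eq_cons, Multiset.prod_cons, Multiset.prod_singleton] at this
  linear_combination this

lemma multiset_triple_mem {x u v t : ℝ} (h : x ∈ ({u, v, t} : Multiset ℝ)) :
    x = u ∨ x = v ∨ x = t := by
  simpa using h

/-- If the items of `I` have all dimensions in `(0,1]` and
total volume at most `1/1728`, then, allowing 90-degree rotations (i.e. each
item may be packed with any permutation of its dimension triple), all items
of `I` pack into a single unit cube bin. -/
theorem stmt19 {ι : Type*} (I : Finset ι) (w d h : ι → ℝ)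
    (hdims : ∀ i ∈ I, 0 < w i ∧ w i ≤ 1 ∧ 0 < d i ∧ d i ≤ 1 ∧
      0 < h i ∧ h i ≤ 1)
    (hvol : ∑ i ∈ I, w i * d i * h i ≤ 1 / 1728) :
    ∃ w' d' h' : ι → ℝ,
      (∀ i ∈ I, ({w' i, d' i, h' i} : Multiset ℝ) = {w i, d i, h i}) ∧
      CanPack I w' d' h' 1 1 1 := by
  classical
  obtain ⟨c, b, a, hms, hab, hbc⟩ : ∃ c b a : ι → ℝ,
      (∀ i, ({c i, b i, a i} : Multiset ℝ) = {w i, d i, h i}) ∧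
      (∀ i, a i ≤ b i) ∧ (∀ i, b i ≤ c i) := by
    choose c b a h1 h2 h3 using fun i => sort3 (w i) (d i) (h i)
    exact ⟨c, b, a, h1, h2, h3⟩
  refine ⟨c, b, a, fun i _ => hms i, ?_⟩
  -- basic bounds on the sorted dimensions
  have hb3 : ∀ i ∈ I, (0 < a i ∧ a i ≤ 1) ∧ (0 < b i ∧ b i ≤ 1) ∧ (0 < c i ∧ c i ≤ 1) := by
    intro i hi
    obtain ⟨p1, p2, p3, p4, p5, p6⟩ := hdims i hi
    have hmem : ∀ x : ℝ, x ∈ ({c i, b i, a i} : Multiset ℝ) → (0 < x ∧ x ≤ 1) := by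
      rw [hms i]
      intro x hx
      rcases multiset_triple_mem hx with rfl | rfl | rfl <;> exact ⟨by assumption, by assumption⟩
    exact ⟨hmem _ (by simp), hmem _ (by simp), hmem _ (by simp)⟩
  have hprod : ∀ i, c i * b i * a i = w i * d i * h i := fun i => multiset_triple_prod (hms i)
  have hvpos : ∀ i ∈ I, 0 < w i * d i * h i := by
    intro i hi
    obtain ⟨p1, _, p3, _, p5, _⟩ := hdims i hi
    positivity
  have hvle : ∀ i ∈ I, w i * d i * h i ≤ 1 / 1728 := fun i hi =>
    le_trans (Finset.single_le_sum (fun j hj => (hvpos j hj).le) hi) hvol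
  have ha8 : ∀ i ∈ I, a i ≤ 2⁻¹ ^ 3 := by
    intro i hi
    obtain ⟨⟨ha0, _⟩, ⟨hb0, _⟩, ⟨hc0, _⟩⟩ := hb3 i hi
    have hv : c i * b i * a i ≤ 1 / 1728 := (hprod i) ▸ hvle i hi
    by_contra hcon
    push_neg at hcon
    norm_num at hcon
    nlinarith [hab i, hbc i, mul_pos hb0 ha0, mul_pos hc0 hb0,
      mul_nonneg (mul_nonneg hb0.le ha0.le) (sub_nonneg.2 (hbc i)),
      mul_nonneg (mul_nonneg ha0.le ha0.le) (sub_nonneg.2 (hab i))]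
  -- dyadic rounding
  choose kA hkA using fun i => round_dyadic (a i)
  choose kB hkB using fun i => round_dyadic (b i)
  choose kC hkC using fun i => round_dyadic (c i)
  set A : ι → ℝ := fun i => 2⁻¹ ^ kA i with hAdef
  set B : ι → ℝ := fun i => 2⁻¹ ^ kB i with hBdef
  set C : ι → ℝ := fun i => 2⁻¹ ^ kC i with hCdef
  have hApos : ∀ i, 0 < A i := fun i => by positivity
  have hBpos : ∀ i, 0 < B i := fun i => by positivity
  have hCpos : ∀ i, 0 < C i := fun i => by positivity
  have hAa : ∀ i ∈ I, a i ≤ A i ∧ A i < 2 * a i := by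
    intro i hi
    obtain ⟨⟨h0, h1⟩, _, _⟩ := hb3 i hi
    obtain ⟨q1, q2, _⟩ := hkA i h0 h1
    exact ⟨q1, q2⟩
  have hBb : ∀ i ∈ I, b i ≤ B i ∧ B i < 2 * b i := by
    intro i hi
    obtain ⟨_, ⟨h0, h1⟩, _⟩ := hb3 i hi
    obtain ⟨q1, q2, _⟩ := hkB i h0 h1
    exact ⟨q1, q2⟩
  have hCc : ∀ i ∈ I, c i ≤ C i ∧ C i < 2 * c i := by
    intro i hi
    obtain ⟨_, _, h0, h1⟩ := hb3 i hi
    obtain ⟨q1, q2, _⟩ := hkC i h0 h1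
    exact ⟨q1, q2⟩
  have hkA3 : ∀ i ∈ I, 3 ≤ kA i := by
    intro i hi
    obtain ⟨⟨h0, h1⟩, _, _⟩ := hb3 i hi
    exact (hkA i h0 h1).2.2 3 (ha8 i hi)
  have hA8 : ∀ i ∈ I, A i ≤ 2⁻¹ ^ 3 := fun i hi =>
    pow_le_pow_of_le_one (by norm_num) (by norm_num) (hkA3 i hi)
  have hC1 : ∀ i, C i ≤ 1 := fun i => pow_le_one₀ (by norm_num) (by norm_num)
  -- row assignment within each (A, B)-class
  set qAB : ι → ℝ × ℝ := fun i => (A i, B i) with hqABdef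
  have hbin1 : ∀ p ∈ I.image qAB, ∃ f : ι → ℕ,
      (∀ i ∈ I.filter (fun i => qAB i = p), f i < ⌈∑ i ∈ I.filter (fun i => qAB i = p), C i⌉₊) ∧
      ∀ r : ℕ, ∑ i ∈ (I.filter (fun i => qAB i = p)).filter (fun i => f i = r), C i ≤ 1 :=
    fun p _ => dyadic_binning _ C (fun i _ => ⟨kC i, rfl⟩)
  choose! rowf hrow1 hrow2 using hbin1
  set f₁ : ι → ℕ := fun i => rowf (qAB i) i with hf₁def
  -- the rows of each height class, and layer assignment
  set R : ℝ → Finset (ℝ × ℕ) :=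
    fun α => (I.filter (fun i => A i = α)).image (fun i => (B i, f₁ i)) with hRdef
  have hbin2 : ∀ α ∈ I.image A, ∃ g : ℝ × ℕ → ℕ,
      (∀ p ∈ R α, g p < ⌈∑ p ∈ R α, p.1⌉₊) ∧
      ∀ s : ℕ, ∑ p ∈ (R α).filter (fun p => g p = s), p.1 ≤ 1 :=
    fun α _ => dyadic_binning (R α) Prod.fst (fun p hp => by
      obtain ⟨j, _, rfl⟩ := Finset.mem_image.1 hp
      exact ⟨kB j, rfl⟩)
  choose! layerf hlay1 hlay2 using hbin2
  set f₂ : ι → ℕ := fun i => layerf (A i) (B i, f₁ i) with hf₂def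
  -- the packing, top level: stack the height classes along z
  apply canPack_concat_z I c b a A (fun α => max α 0 * (⌈∑ p ∈ R α, p.1⌉₊ : ℝ)) 1 1 1
  · intro α
    positivity
  · -- each height class packs into 1 × 1 × (α⌈Sα⌉)
    intro α hα
    have hmaxα : max α 0 = α := by
      obtain ⟨i₀, _, hi₀A⟩ := Finset.mem_image.1 hα
      rw [max_eq_left (le_of_lt (hi₀A ▸ hApos i₀))]
    apply canPack_concat_z (I.filter (fun i => A i = α)) c b a f₂ (fun _ => max α 0) 1 1 _
    · intro s
      positivity
    · -- each layer packs into 1 × 1 × α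
      intro s hs
      apply canPack_concat_y _ c b a (fun i => (B i, f₁ i)) (fun p => max p.1 0) 1 1 (max α 0)
      · intro p
        positivity
      · -- each row packs into 1 × β × α
        intro p hp
        obtain ⟨j₀, hj₀mem, hj₀p⟩ := Finset.mem_image.1 hp
        have hj₀I : j₀ ∈ I := Finset.mem_of_mem_filter _ (Finset.mem_of_mem_filter _ hj₀mem)
        have hj₀α : A j₀ = α := (Finset.mem_filter.1 (Finset.mem_of_mem_filter _ hj₀mem)).2
        apply canPack_line
        · intro i hi
          have hi2 := Finset.mem_filter.1 hi
          have hi3 := Finset.mem_filter.1 hi2.1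
          have hi4 := Finset.mem_filter.1 hi3.1
          have hiI : i ∈ I := hi4.1
          have hiA : A i = α := hi4.2
          have hip : (B i, f₁ i) = p := hi2.2
          refine ⟨(hb3 i hiI).2.2.1.le, ?_, ?_⟩
          · calc b i ≤ B i := (hBb i hiI).1
              _ = p.1 := by rw [← hip]
              _ ≤ max p.1 0 := le_max_left _ _
          · calc a i ≤ A i := (hAa i hiI).1
              _ = α := hiA
              _ ≤ max α 0 := le_max_left _ _
        · -- widths in a row sum to at most 1
          have hqj₀ : qAB j₀ = (α, p.1) := by
            rw [hqABdef]
            dsimp only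
            rw [hj₀α, ← hj₀p]
          have hsub : ((I.filter (fun i => A i = α)).filter (fun i => f₂ i = s)).filter
                (fun i => (B i, f₁ i) = p)
              ⊆ (I.filter (fun i => qAB i = (α, p.1))).filter
                (fun i => rowf (α, p.1) i = p.2) := by
            intro i hi
            have hi2 := Finset.mem_filter.1 hi
            have hi3 := Finset.mem_filter.1 hi2.1
            have hi4 := Finset.mem_filter.1 hi3.1
            have hip : (B i, f₁ i) = p := hi2.2
            have hqi : qAB i = (α, p.1) := by
              rw [hqABdef]
              dsimp only
              rw [hi4.2]
              rw [← hip]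
            refine Finset.mem_filter.2 ⟨Finset.mem_filter.2 ⟨hi4.1, hqi⟩, ?_⟩
            have : f₁ i = p.2 := by rw [← hip]
            rw [hf₁def] at this
            dsimp only at this
            rw [hqi] at this
            exact this
          have hmemq : (α, p.1) ∈ I.image qAB := by
            rw [← hqj₀]
            exact Finset.mem_image_of_mem qAB hj₀I
          calc ∑ i ∈ ((I.filter (fun i => A i = α)).filter (fun i => f₂ i = s)).filter
                (fun i => (B i, f₁ i) = p), c i
              ≤ ∑ i ∈ ((I.filter (fun i => A i = α)).filter (fun i => f₂ i = s)).filter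
                (fun i => (B i, f₁ i) = p), C i := by
                apply Finset.sum_le_sum
                intro i hi
                have hiI : i ∈ I := (Finset.mem_filter.1 (Finset.mem_filter.1
                  (Finset.mem_filter.1 hi).1).1).1
                exact (hCc i hiI).1
            _ ≤ ∑ i ∈ (I.filter (fun i => qAB i = (α, p.1))).filter
                (fun i => rowf (α, p.1) i = p.2), C i :=
                Finset.sum_le_sum_of_subset_of_nonneg hsub (fun i _ _ => (hCpos i).le)
            _ ≤ 1 := hrow2 (α, p.1) hmemq p.2
      · -- depths in a layer sum to at most 1
        have hsub : ((I.filter (fun i => A i = α)).filter (fun i => f₂ i = s)).image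
              (fun i => (B i, f₁ i)) ⊆ (R α).filter (fun p => layerf α p = s) := by
          intro p hp
          obtain ⟨i, hi, rfl⟩ := Finset.mem_image.1 hp
          have hi2 := Finset.mem_filter.1 hi
          refine Finset.mem_filter.2 ⟨Finset.mem_image_of_mem _ hi2.1, ?_⟩
          have : f₂ i = s := hi2.2
          rw [hf₂def] at this
          dsimp only at this
          rw [(Finset.mem_filter.1 hi2.1).2] at this
          exact this
        calc ∑ p ∈ ((I.filter (fun i => A i = α)).filter (fun i => f₂ i = s)).image
              (fun i => (B i, f₁ i)), max p.1 0
            = ∑ p ∈ ((I.filter (fun i => A i = α)).filter (fun i => f₂ i = s)).image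
              (fun i => (B i, f₁ i)), p.1 := by
              apply Finset.sum_congr rfl
              intro p hp
              obtain ⟨i, _, rfl⟩ := Finset.mem_image.1 hp
              exact max_eq_left (hBpos i).le
          _ ≤ ∑ p ∈ (R α).filter (fun p => layerf α p = s), p.1 := by
              apply Finset.sum_le_sum_of_subset_of_nonneg hsub
              intro p hpmem _
              obtain ⟨j, _, rfl⟩ := Finset.mem_image.1 (Finset.mem_of_mem_filter _ hpmem)
              exact (hBpos j).le
          _ ≤ 1 := hlay2 α hα s
    · -- the number of layers in the class is at most ⌈Sα⌉
      have hcard : ((I.filter (fun i => A i = α)).image f₂).card ≤ ⌈∑ p ∈ R α, p.1⌉₊ := by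
        have hsub : (I.filter (fun i => A i = α)).image f₂ ⊆
            Finset.range ⌈∑ p ∈ R α, p.1⌉₊ := by
          intro s hs
          obtain ⟨i, hi, rfl⟩ := Finset.mem_image.1 hs
          have hi2 := Finset.mem_filter.1 hi
          have hmem : (B i, f₁ i) ∈ R α := by
            rw [hRdef]
            exact Finset.mem_image_of_mem _ hi
          have := hlay1 α hα (B i, f₁ i) hmem
          rw [Finset.mem_range, hf₂def]
          dsimp only
          rw [hi2.2]
          exact this
        calc ((I.filter (fun i => A i = α)).image f₂).card
            ≤ (Finset.range ⌈∑ p ∈ R α, p.1⌉₊).card := Finset.card_le_card hsub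
          _ = ⌈∑ p ∈ R α, p.1⌉₊ := Finset.card_range _
      calc ∑ _s ∈ (I.filter (fun i => A i = α)).image f₂, max α 0
          = ((I.filter (fun i => A i = α)).image f₂).card * max α 0 := by
            rw [Finset.sum_const, nsmul_eq_mul]
        _ ≤ (⌈∑ p ∈ R α, p.1⌉₊ : ℝ) * max α 0 := by
            apply mul_le_mul_of_nonneg_right _ (le_max_right _ _)
            exact_mod_cast hcard
        _ = max α 0 * (⌈∑ p ∈ R α, p.1⌉₊ : ℝ) := by ring
  · -- the total height of all classes is at most 1
    have hvI : ∑ i ∈ I, w i * d i * h i ≤ 1 / 1728 := hvol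
    have hIαβ : ∀ α β : ℝ, I.filter (fun i => qAB i = (α, β)) =
        (I.filter (fun i => A i = α)).filter (fun i => B i = β) := by
      intro α β
      ext i
      simp only [Finset.mem_filter, hqABdef, Prod.mk.injEq, and_assoc]
    have key : ∀ α ∈ I.image A,
        max α 0 * (⌈∑ p ∈ R α, p.1⌉₊ : ℝ) ≤
          (∑ i ∈ I.filter (fun i => A i = α), A i * B i * C i) +
          (∑ β ∈ (I.filter (fun i => A i = α)).image B, α * β) + α := by
      intro α hα
      obtain ⟨i₀, hi₀I, hi₀A⟩ := Finset.mem_image.1 hα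
      have hαpos : 0 < α := hi₀A ▸ hApos i₀
      rw [max_eq_left hαpos.le]
      have hSα0 : 0 ≤ ∑ p ∈ R α, p.1 := Finset.sum_nonneg fun p hp => by
        obtain ⟨j, _, rfl⟩ := Finset.mem_image.1 hp
        exact (hBpos j).le
      have hceil : (⌈∑ p ∈ R α, p.1⌉₊ : ℝ) ≤ (∑ p ∈ R α, p.1) + 1 :=
        (Nat.ceil_lt_add_one hSα0).le
      have himeq : (R α).image Prod.fst = (I.filter (fun i => A i = α)).image B := by
        simp only [hRdef]
        rw [Finset.image_image]
        rfl
      have hSα : (∑ p ∈ R α, p.1) ≤ ∑ β ∈ (I.filter (fun i => A i = α)).image B,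
          β * ((∑ i ∈ I.filter (fun i => qAB i = (α, β)), C i) + 1) := by
        rw [← Finset.sum_fiberwise_of_maps_to (t := (R α).image Prod.fst)
          (fun p hp => Finset.mem_image_of_mem Prod.fst hp) (fun p : ℝ × ℕ => p.1)]
        rw [himeq]
        apply Finset.sum_le_sum
        intro β hβ
        obtain ⟨j₁, hj₁mem, hj₁B⟩ := Finset.mem_image.1 hβ
        have hj₁I : j₁ ∈ I := (Finset.mem_filter.1 hj₁mem).1
        have hj₁A : A j₁ = α := (Finset.mem_filter.1 hj₁mem).2
        have hβpos : 0 < β := hj₁B ▸ hBpos j₁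
        have hqmem : (α, β) ∈ I.image qAB := by
          have hq : qAB j₁ = (α, β) := by
            simp only [hqABdef]
            rw [hj₁A, hj₁B]
          exact hq ▸ Finset.mem_image_of_mem qAB hj₁I
        have hC0 : 0 ≤ ∑ i ∈ I.filter (fun i => qAB i = (α, β)), C i :=
          Finset.sum_nonneg fun i _ => (hCpos i).le
        have hcardN : ((R α).filter (fun p => p.1 = β)).card ≤
            ⌈∑ i ∈ I.filter (fun i => qAB i = (α, β)), C i⌉₊ := by
          have hmaps : ∀ p ∈ (R α).filter (fun p => p.1 = β),
              p.2 ∈ Finset.range ⌈∑ i ∈ I.filter (fun i => qAB i = (α, β)), C i⌉₊ := by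
            intro p hp
            obtain ⟨hp1, hp2⟩ := Finset.mem_filter.1 hp
            rw [hRdef] at hp1
            obtain ⟨j, hjmem, rfl⟩ := Finset.mem_image.1 hp1
            have hjI : j ∈ I := (Finset.mem_filter.1 hjmem).1
            have hjA : A j = α := (Finset.mem_filter.1 hjmem).2
            have hqj : qAB j = (α, β) := by
              simp only [hqABdef]
              rw [hjA]
              simp only at hp2
              rw [hp2]
            have hjmem2 : j ∈ I.filter (fun i => qAB i = (α, β)) :=
              Finset.mem_filter.2 ⟨hjI, hqj⟩
            have := hrow1 (α, β) hqmem j hjmem2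
            rw [Finset.mem_range]
            simp only [hf₁def, hqj]
            exact this
          have hinj : Set.InjOn Prod.snd ((R α).filter (fun p => p.1 = β) : Set (ℝ × ℕ)) := by
            intro p hp q hq hpq
            have hp2 : p.1 = β := (Finset.mem_filter.1 (Finset.mem_coe.1 hp)).2
            have hq2 : q.1 = β := (Finset.mem_filter.1 (Finset.mem_coe.1 hq)).2
            exact Prod.ext (hp2.trans hq2.symm) hpq
          calc ((R α).filter (fun p => p.1 = β)).card
              ≤ (Finset.range ⌈∑ i ∈ I.filter (fun i => qAB i = (α, β)), C i⌉₊).card :=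
                Finset.card_le_card_of_injOn Prod.snd hmaps hinj
            _ = _ := Finset.card_range _
        have hconst : ∑ p ∈ (R α).filter (fun p => p.1 = β), p.1 =
            (((R α).filter (fun p => p.1 = β)).card : ℝ) * β := by
          rw [Finset.sum_congr rfl (fun p hp => (Finset.mem_filter.1 hp).2),
            Finset.sum_const, nsmul_eq_mul]
        have hceil2 : (⌈∑ i ∈ I.filter (fun i => qAB i = (α, β)), C i⌉₊ : ℝ) ≤
            (∑ i ∈ I.filter (fun i => qAB i = (α, β)), C i) + 1 :=
          (Nat.ceil_lt_add_one hC0).le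
        have hcardR : (((R α).filter (fun p => p.1 = β)).card : ℝ) ≤
            (⌈∑ i ∈ I.filter (fun i => qAB i = (α, β)), C i⌉₊ : ℝ) := by
          exact_mod_cast hcardN
        calc ∑ p ∈ (R α).filter (fun p => p.1 = β), p.1
            = (((R α).filter (fun p => p.1 = β)).card : ℝ) * β := hconst
          _ ≤ ((∑ i ∈ I.filter (fun i => qAB i = (α, β)), C i) + 1) * β := by
              apply mul_le_mul_of_nonneg_right (hcardR.trans hceil2) hβpos.le
          _ = β * ((∑ i ∈ I.filter (fun i => qAB i = (α, β)), C i) + 1) := by ring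
      have hABCeq : ∑ β ∈ (I.filter (fun i => A i = α)).image B,
          (α * β) * (∑ i ∈ I.filter (fun i => qAB i = (α, β)), C i)
          = ∑ i ∈ I.filter (fun i => A i = α), A i * B i * C i := by
        calc ∑ β ∈ (I.filter (fun i => A i = α)).image B,
            (α * β) * (∑ i ∈ I.filter (fun i => qAB i = (α, β)), C i)
            = ∑ β ∈ (I.filter (fun i => A i = α)).image B,
              ∑ i ∈ (I.filter (fun i => A i = α)).filter (fun i => B i = β),
                A i * B i * C i := by
              apply Finset.sum_congr rfl
              intro β hβ
              rw [hIαβ, Finset.mul_sum]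
              apply Finset.sum_congr rfl
              intro i hi
              have hiA : A i = α := (Finset.mem_filter.1 (Finset.mem_filter.1 hi).1).2
              have hiB : B i = β := (Finset.mem_filter.1 hi).2
              rw [hiA, hiB]
          _ = ∑ i ∈ I.filter (fun i => A i = α), A i * B i * C i :=
              Finset.sum_fiberwise_of_maps_to (fun i hi => Finset.mem_image_of_mem B hi) _
      have hexp : ∀ β ∈ (I.filter (fun i => A i = α)).image B,
          α * (β * ((∑ i ∈ I.filter (fun i => qAB i = (α, β)), C i) + 1)) =
          (α * β) * (∑ i ∈ I.filter (fun i => qAB i = (α, β)), C i) + α * β :=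
        fun β _ => by ring
      calc α * (⌈∑ p ∈ R α, p.1⌉₊ : ℝ)
          ≤ α * ((∑ p ∈ R α, p.1) + 1) := mul_le_mul_of_nonneg_left hceil hαpos.le
        _ ≤ α * ((∑ β ∈ (I.filter (fun i => A i = α)).image B,
              β * ((∑ i ∈ I.filter (fun i => qAB i = (α, β)), C i) + 1)) + 1) := by
            apply mul_le_mul_of_nonneg_left (by linarith [hSα]) hαpos.le
        _ = (∑ β ∈ (I.filter (fun i => A i = α)).image B,
              (α * β) * (∑ i ∈ I.filter (fun i => qAB i = (α, β)), C i)) +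
            (∑ β ∈ (I.filter (fun i => A i = α)).image B, α * β) + α := by
            rw [mul_add, mul_one, Finset.mul_sum, Finset.sum_congr rfl hexp,
              Finset.sum_add_distrib]
        _ = (∑ i ∈ I.filter (fun i => A i = α), A i * B i * C i) +
            (∑ β ∈ (I.filter (fun i => A i = α)).image B, α * β) + α := by
            rw [hABCeq]
    -- now the global sums
    have hT1 : ∑ α ∈ I.image A, ∑ i ∈ I.filter (fun i => A i = α), A i * B i * C i
        = ∑ i ∈ I, A i * B i * C i :=
      Finset.sum_fiberwise_of_maps_to (fun i hi => Finset.mem_image_of_mem A hi) _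
    have hT1b : ∑ i ∈ I, A i * B i * C i ≤ 8 * (1 / 1728) := by
      have hstep : ∀ i ∈ I, A i * B i * C i ≤ 8 * (w i * d i * h i) := by
        intro i hi
        obtain ⟨⟨ha0, _⟩, ⟨hb0, _⟩, ⟨hc0, _⟩⟩ := hb3 i hi
        have c1 : A i ≤ 2 * a i := (hAa i hi).2.le
        have c2 : B i ≤ 2 * b i := (hBb i hi).2.le
        have c3 : C i ≤ 2 * c i := (hCc i hi).2.le
        have p1 : A i * B i ≤ (2 * a i) * (2 * b i) :=
          mul_le_mul c1 c2 (hBpos i).le (by linarith)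
        have p2 : A i * B i * C i ≤ ((2 * a i) * (2 * b i)) * (2 * c i) :=
          mul_le_mul p1 c3 (hCpos i).le (by nlinarith)
        have : ((2 * a i) * (2 * b i)) * (2 * c i) = 8 * (c i * b i * a i) := by ring
        rw [this, hprod i] at p2
        exact p2
      calc ∑ i ∈ I, A i * B i * C i ≤ ∑ i ∈ I, 8 * (w i * d i * h i) :=
            Finset.sum_le_sum hstep
        _ = 8 * ∑ i ∈ I, w i * d i * h i := (Finset.mul_sum _ _ _).symm
        _ ≤ 8 * (1 / 1728) := by linarith [hvI]
    have hY : ∑ α ∈ I.image A, α ≤ 2 * 2⁻¹ ^ 3 := by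
      apply sum_distinct_dyadic _ 3
      intro x hx
      obtain ⟨j, hj, rfl⟩ := Finset.mem_image.1 hx
      exact ⟨kA j, hkA3 j hj, rfl⟩
    have hM : ∑ α ∈ I.image A, ∑ β ∈ (I.filter (fun i => A i = α)).image B, α * β
        ≤ 64 * (1 / 1728) + (2 * 2⁻¹ ^ 3) * (2 * 2⁻¹ ^ 4) := by
      have hper : ∀ α ∈ I.image A,
          ∑ β ∈ (I.filter (fun i => A i = α)).image B, α * β ≤
            64 * (∑ i ∈ I.filter (fun i => A i = α), w i * d i * h i) +
            α * (2 * 2⁻¹ ^ 4) := by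
        intro α hα
        obtain ⟨i₀, hi₀I, hi₀A⟩ := Finset.mem_image.1 hα
        have hαpos : 0 < α := hi₀A ▸ hApos i₀
        rw [← Finset.sum_filter_add_sum_filter_not ((I.filter (fun i => A i = α)).image B)
          (fun β => 2⁻¹ ^ 3 ≤ β) (fun β => α * β)]
        have hbig : ∑ β ∈ ((I.filter (fun i => A i = α)).image B).filter
              (fun β => 2⁻¹ ^ 3 ≤ β), α * β ≤
            64 * ∑ i ∈ I.filter (fun i => A i = α), w i * d i * h i := by
          have hperβ : ∀ β ∈ ((I.filter (fun i => A i = α)).image B).filter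
              (fun β => 2⁻¹ ^ 3 ≤ β), α * β ≤
              64 * ∑ i ∈ (I.filter (fun i => A i = α)).filter (fun i => B i = β),
                w i * d i * h i := by
            intro β hβ
            obtain ⟨hβim, hβ8⟩ := Finset.mem_filter.1 hβ
            obtain ⟨j, hjmem, hjB⟩ := Finset.mem_image.1 hβim
            have hjI : j ∈ I := (Finset.mem_filter.1 hjmem).1
            have hjA : A j = α := (Finset.mem_filter.1 hjmem).2
            obtain ⟨⟨ha0, _⟩, ⟨hb0, _⟩, ⟨hc0, _⟩⟩ := hb3 j hjI
            have c1 : α < 2 * a j := hjA ▸ (hAa j hjI).2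
            have c2 : β < 2 * b j := hjB ▸ (hBb j hjI).2
            have c3 : β ≤ 2 * c j := by linarith [hbc j]
            have hβpos : 0 < β := hjB ▸ hBpos j
            have p1 : α * β ≤ (2 * a j) * (2 * b j) :=
              mul_le_mul c1.le c2.le hβpos.le (by linarith)
            have p2 : (α * β) * β ≤ ((2 * a j) * (2 * b j)) * (2 * c j) :=
              mul_le_mul p1 c3 hβpos.le (by nlinarith)
            have hval : ((2 * a j) * (2 * b j)) * (2 * c j) = 8 * (c j * b j * a j) := by
              ring
            rw [hval, hprod j] at p2
            have hαβ64 : α * β ≤ 64 * (w j * d j * h j) := by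
              have h8 : (2:ℝ)⁻¹ ^ 3 = 1 / 8 := by norm_num
              rw [h8] at hβ8
              nlinarith [mul_pos hαpos hβpos]
            have hjin : j ∈ (I.filter (fun i => A i = α)).filter (fun i => B i = β) :=
              Finset.mem_filter.2 ⟨Finset.mem_filter.2 ⟨hjI, hjA⟩, hjB⟩
            have hsingle : w j * d j * h j ≤
                ∑ i ∈ (I.filter (fun i => A i = α)).filter (fun i => B i = β),
                  w i * d i * h i :=
              Finset.single_le_sum (fun i hi => (hvpos i (Finset.mem_filter.1
                (Finset.mem_filter.1 hi).1).1).le) hjin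
            linarith
          calc ∑ β ∈ ((I.filter (fun i => A i = α)).image B).filter
                (fun β => 2⁻¹ ^ 3 ≤ β), α * β
              ≤ ∑ β ∈ ((I.filter (fun i => A i = α)).image B).filter
                (fun β => 2⁻¹ ^ 3 ≤ β),
                64 * ∑ i ∈ (I.filter (fun i => A i = α)).filter (fun i => B i = β),
                  w i * d i * h i := Finset.sum_le_sum hperβ
            _ ≤ ∑ β ∈ (I.filter (fun i => A i = α)).image B,
                64 * ∑ i ∈ (I.filter (fun i => A i = α)).filter (fun i => B i = β),
                  w i * d i * h i := by
                apply Finset.sum_le_sum_of_subset_of_nonneg (Finset.filter_subset _ _)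
                intro β hβ _
                have : 0 ≤ ∑ i ∈ (I.filter (fun i => A i = α)).filter (fun i => B i = β),
                    w i * d i * h i :=
                  Finset.sum_nonneg (fun i hi => (hvpos i (Finset.mem_filter.1
                    (Finset.mem_filter.1 hi).1).1).le)
                linarith
            _ = 64 * ∑ β ∈ (I.filter (fun i => A i = α)).image B,
                ∑ i ∈ (I.filter (fun i => A i = α)).filter (fun i => B i = β),
                  w i * d i * h i := (Finset.mul_sum _ _ _).symm
            _ = 64 * ∑ i ∈ I.filter (fun i => A i = α), w i * d i * h i := by
                rw [Finset.sum_fiberwise_of_maps_to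
                  (fun i hi => Finset.mem_image_of_mem B hi)]
        have hsmall : ∑ β ∈ ((I.filter (fun i => A i = α)).image B).filter
              (fun β => ¬ 2⁻¹ ^ 3 ≤ β), α * β ≤ α * (2 * 2⁻¹ ^ 4) := by
          rw [← Finset.mul_sum]
          apply mul_le_mul_of_nonneg_left _ hαpos.le
          apply sum_distinct_dyadic _ 4
          intro x hx
          obtain ⟨hxim, hxlt⟩ := Finset.mem_filter.1 hx
          obtain ⟨j, hjmem, rfl⟩ := Finset.mem_image.1 hxim
          refine ⟨kB j, ?_, rfl⟩
          by_contra hcon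
          push_neg at hcon
          exact hxlt (pow_le_pow_of_le_one (by norm_num) (by norm_num) (by omega))
        linarith
      calc ∑ α ∈ I.image A, ∑ β ∈ (I.filter (fun i => A i = α)).image B, α * β
          ≤ ∑ α ∈ I.image A, (64 * (∑ i ∈ I.filter (fun i => A i = α), w i * d i * h i) +
              α * (2 * 2⁻¹ ^ 4)) := Finset.sum_le_sum hper
        _ = 64 * (∑ α ∈ I.image A, ∑ i ∈ I.filter (fun i => A i = α), w i * d i * h i) +
            (∑ α ∈ I.image A, α) * (2 * 2⁻¹ ^ 4) := by
            rw [Finset.sum_add_distrib, ← Finset.mul_sum, ← Finset.sum_mul]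
        _ ≤ 64 * (1 / 1728) + (2 * 2⁻¹ ^ 3) * (2 * 2⁻¹ ^ 4) := by
            have hfib : ∑ α ∈ I.image A, ∑ i ∈ I.filter (fun i => A i = α),
                w i * d i * h i = ∑ i ∈ I, w i * d i * h i :=
              Finset.sum_fiberwise_of_maps_to (fun i hi => Finset.mem_image_of_mem A hi) _
            rw [hfib]
            have h1 : (0:ℝ) ≤ 2 * 2⁻¹ ^ 4 := by norm_num
            have h2 : (∑ α ∈ I.image A, α) * (2 * 2⁻¹ ^ 4) ≤
                (2 * 2⁻¹ ^ 3) * (2 * 2⁻¹ ^ 4) := mul_le_mul_of_nonneg_right hY h1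
            linarith
    calc ∑ α ∈ I.image A, max α 0 * (⌈∑ p ∈ R α, p.1⌉₊ : ℝ)
        ≤ ∑ α ∈ I.image A,
            ((∑ i ∈ I.filter (fun i => A i = α), A i * B i * C i) +
            (∑ β ∈ (I.filter (fun i => A i = α)).image B, α * β) + α) :=
          Finset.sum_le_sum key
      _ = (∑ α ∈ I.image A, ∑ i ∈ I.filter (fun i => A i = α), A i * B i * C i) +
          (∑ α ∈ I.image A, ∑ β ∈ (I.filter (fun i => A i = α)).image B, α * β) +
          (∑ α ∈ I.image A, α) := by
          rw [Finset.sum_add_distrib, Finset.sum_add_distrib]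
      _ ≤ 1 := by
          rw [hT1]
          have e3 : (2:ℝ)⁻¹ ^ 3 = 1 / 8 := by norm_num
          have e4 : (2:ℝ)⁻¹ ^ 4 = 1 / 16 := by norm_num
          rw [e3, e4] at hM
          rw [e3] at hY
          linarith [hT1b, hM, hY]
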